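/- arXiv:2407.15547 — 4 statements merged into one kernel-verified Lean document; each statement's English description precedes it below -/
import Mathlib

section
/- Let α < 0 and r > 0, and let τ ∈ V_{α,r} with τ(0) = τ'(0) = 0, with associated extension F. For every ε > 0 there exists g ∈ C¹[0,∞) with g'(x) → 0 as x → ∞, g(0) = g'(0) = 0, such that L{g;·} has an analytic extension G to an open neighborhood Ω of R̄_{α,r}, and sup_{x≥0}|τ'(x) − g'(x)| + sup_{s∈R̄_{α,r}} |F(s) − G(s)| ≤ ε. Moreover one can take g(x) = τ((1+λ)x) for all sufficiently small λ > 0. -/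
open Filter Set MeasureTheory

/-- The Laplace transform `L{f;s} = ∫_0^∞ f(x) e^{-sx} dx`. -/
noncomputable def Laplace (f : ℝ → ℂ) (s : ℂ) : ℂ :=
  ∫ x in Set.Ioi (0 : ℝ), f x * Complex.exp (-(s * (x : ℂ)))

/-- The closed rectangle `R̄_{α,r} = {s : α ≤ Re s ≤ 1, |Im s| ≤ r}`. -/
def Rbar (α r : ℝ) : Set ℂ := {s : ℂ | α ≤ s.re ∧ s.re ≤ 1 ∧ |s.im| ≤ r}

/-- The open rectangle `R_{α,r} = {s : α < Re s < 1, |Im s| < r}`. -/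
def Ropen (α r : ℝ) : Set ℂ := {s : ℂ | α < s.re ∧ s.re < 1 ∧ |s.im| < r}

/-- Change of variables in the Laplace transform. -/
lemma laplace_dilate (τ : ℝ → ℂ) {c : ℝ} (hc : 0 < c) (s : ℂ) :
    Laplace (fun y => τ (c * y)) s = (c : ℂ)⁻¹ * Laplace τ (s / (c : ℂ)) := by
  have hc' : (c : ℂ) ≠ 0 := by exact_mod_cast hc.ne'
  have key := integral_comp_mul_left_Ioi
      (fun u : ℝ => τ u * Complex.exp (-(s / (c : ℂ) * (u : ℂ)))) 0 hc
  rw [mul_zero] at key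
  unfold Laplace
  have h1 : ∀ x : ℝ, τ (c * x) * Complex.exp (-(s * (x : ℂ)))
      = τ (c * x) * Complex.exp (-(s / (c : ℂ) * ((c * x : ℝ) : ℂ))) := by
    intro x
    congr 2
    push_cast
    field_simp
  simp_rw [h1]
  rw [key, Complex.real_smul]
  push_cast
  ring

/-- The closed rectangle is compact. -/
lemma isCompact_Rbar (α r : ℝ) : IsCompact (Rbar α r) := by
  apply Metric.isCompact_of_isClosed_isBounded
  · have h : Rbar α r = Complex.re ⁻¹' (Icc α 1) ∩ Complex.im ⁻¹' (Icc (-r) r) := by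
      ext s
      simp only [Rbar, mem_setOf_eq, mem_inter_iff, mem_preimage, mem_Icc, abs_le]
      tauto
    rw [h]
    exact (isClosed_Icc.preimage Complex.continuous_re).inter
      (isClosed_Icc.preimage Complex.continuous_im)
  · apply Bornology.IsBounded.subset
      (Metric.isBounded_closedBall (x := (0 : ℂ)) (r := |α| + 1 + r))
    intro s hs
    obtain ⟨h1, h2, h3⟩ := hs
    simp only [Metric.mem_closedBall, dist_zero_right]
    calc ‖s‖ = ‖s‖ := rfl
      _ ≤ |s.re| + |s.im| := Complex.norm_le_abs_re_add_abs_im s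
      _ ≤ (|α| + 1) + r := by
          gcongr
          rw [abs_le]
          constructor
          · linarith [neg_abs_le α, abs_nonneg α]
          · linarith [abs_nonneg α]

/-- Step 1 in the proof that `Y` is dense in `V⁰_{α,r}`: for `τ ∈ V_{α,r}` with
`τ(0) = τ'(0) = 0` and extension `F`, and every `ε > 0`, the dilates
`g(x) = τ((1+λ)x)` for all sufficiently small `λ > 0` are `C¹` with `g'(x) → 0`,
`g(0) = g'(0) = 0`, have Laplace transform extending analytically to an open
neighborhood `Ω` of `R̄_{α,r}`, and satisfy `‖τ - g‖_{α,r} ≤ ε`. -/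
theorem step1_dilation_approximation
    (α r : ℝ) (hα : α < 0) (hr : 0 < r)
    (τ τ' : ℝ → ℂ) (F : ℂ → ℂ)
    (hder : ∀ x ∈ Set.Ici (0 : ℝ), HasDerivWithinAt τ (τ' x) (Set.Ici 0) x)
    (hcont : ContinuousOn τ' (Set.Ici 0))
    (hto0 : Tendsto τ' atTop (nhds 0))
    (hτ0 : τ 0 = 0) (hτ'0 : τ' 0 = 0)
    (hFan : DifferentiableOn ℂ F (Ropen α r))
    (hFcont : ContinuousOn F (Rbar α r))
    (hFeq : ∀ s ∈ Rbar α r, 0 < s.re → F s = Laplace τ s)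
    (ε : ℝ) (hε : 0 < ε) :
    ∃ lam₀ : ℝ, 0 < lam₀ ∧ ∀ lam : ℝ, 0 < lam → lam < lam₀ →
      ∃ (g' : ℝ → ℂ) (Ω : Set ℂ) (G : ℂ → ℂ),
        (∀ x ∈ Set.Ici (0 : ℝ),
          HasDerivWithinAt (fun y : ℝ => τ ((1 + lam) * y)) (g' x) (Set.Ici 0) x) ∧
        ContinuousOn g' (Set.Ici 0) ∧
        Tendsto g' atTop (nhds 0) ∧
        τ ((1 + lam) * 0) = 0 ∧ g' 0 = 0 ∧
        IsOpen Ω ∧ Rbar α r ⊆ Ω ∧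
        DifferentiableOn ℂ G Ω ∧
        (∀ s ∈ Ω, 0 < s.re → G s = Laplace (fun y : ℝ => τ ((1 + lam) * y)) s) ∧
        ∃ ε₁ ε₂ : ℝ, 0 ≤ ε₁ ∧ 0 ≤ ε₂ ∧ ε₁ + ε₂ ≤ ε ∧
          (∀ x : ℝ, 0 ≤ x → ‖τ' x - g' x‖ ≤ ε₁) ∧
          (∀ s ∈ Rbar α r, ‖F s - G s‖ ≤ ε₂) := by
  -- τ' is eventually small
  obtain ⟨X₁, hX₁⟩ : ∃ X : ℝ, ∀ x ≥ X, ‖τ' x‖ < ε / 8 := by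
    have := Metric.tendsto_atTop.mp hto0 (ε / 8) (by positivity)
    obtain ⟨N, hN⟩ := this
    exact ⟨N, fun x hx => by simpa [dist_eq_norm] using hN x hx⟩
  set X : ℝ := max X₁ 0 with hXdef
  have hX0 : (0 : ℝ) ≤ X := le_max_right _ _
  have hXsmall : ∀ x ≥ X, ‖τ' x‖ < ε / 8 := fun x hx => hX₁ x (le_trans (le_max_left _ _) hx)
  -- bound M for τ' on [0,∞)
  obtain ⟨M₁, hM₁⟩ := (isCompact_Icc (a := (0:ℝ)) (b := X)).exists_bound_of_continuousOn
      (hcont.mono (fun x hx => hx.1))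
  set M : ℝ := max M₁ (ε / 8) with hMdef
  have hMpos : 0 < M := lt_of_lt_of_le (by positivity) (le_max_right _ _)
  have hM : ∀ x : ℝ, 0 ≤ x → ‖τ' x‖ ≤ M := by
    intro x hx
    rcases le_or_gt x X with h | h
    · exact le_trans (hM₁ x ⟨hx, h⟩) (le_max_left _ _)
    · exact le_trans (hXsmall x h.le).le (le_max_right _ _)
  -- uniform continuity of τ' on [0, 2X+2]
  have hucτ : UniformContinuousOn τ' (Icc 0 (2 * X + 2)) :=
    (isCompact_Icc).uniformContinuousOn_of_continuous (hcont.mono (fun x hx => hx.1))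
  obtain ⟨δ₁, hδ₁pos, hδ₁⟩ := Metric.uniformContinuousOn_iff.mp hucτ (ε / 8) (by positivity)
  -- compactness facts for F
  have hRc : IsCompact (Rbar α r) := isCompact_Rbar α r
  obtain ⟨MF, hMF⟩ := hRc.exists_bound_of_continuousOn hFcont
  set C : ℝ := |α| + 1 + r with hCdef
  have hCpos : 0 < C := by positivity
  have hnormC : ∀ s ∈ Rbar α r, ‖s‖ ≤ C := by
    intro s hs
    obtain ⟨h1, h2, h3⟩ := hs
    calc ‖s‖ = ‖s‖ := rfl
      _ ≤ |s.re| + |s.im| := Complex.norm_le_abs_re_add_abs_im s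
      _ ≤ (|α| + 1) + r := by
          gcongr
          rw [abs_le]
          exact ⟨by linarith [neg_abs_le α, abs_nonneg α], by linarith [abs_nonneg α]⟩
  clear_value X M C
  have hucF : UniformContinuousOn F (Rbar α r) :=
    hRc.uniformContinuousOn_of_continuous hFcont
  obtain ⟨δ₂, hδ₂pos, hδ₂⟩ := Metric.uniformContinuousOn_iff.mp hucF (ε / 4) (by positivity)
  -- choice of lam₀
  refine ⟨min (min (δ₁ / (X + 1)) (δ₂ / (C + 1))) (min 1 (min (ε / (8 * M)) (ε / (4 * (|MF| + 1))))),
    by positivity, ?_⟩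
  intro lam hlam hlam₀
  have hlam1 : lam < 1 := lt_of_lt_of_le hlam₀ (le_trans (min_le_right _ _) (min_le_left _ _))
  have hlamδ₁ : lam < δ₁ / (X + 1) :=
    lt_of_lt_of_le hlam₀ (le_trans (min_le_left _ _) (min_le_left _ _))
  have hlamδ₂ : lam < δ₂ / (C + 1) :=
    lt_of_lt_of_le hlam₀ (le_trans (min_le_left _ _) (min_le_right _ _))
  have hlamM : lam < ε / (8 * M) := lt_of_lt_of_le hlam₀
    (le_trans (min_le_right _ _) (le_trans (min_le_right _ _) (min_le_left _ _)))
  have hlamMF : lam < ε / (4 * (|MF| + 1)) := lt_of_lt_of_le hlam₀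
    (le_trans (min_le_right _ _) (le_trans (min_le_right _ _) (min_le_right _ _)))
  set c : ℝ := 1 + lam with hcdef
  have hc : 0 < c := by positivity
  have hc1 : 1 < c := by rw [hcdef]; linarith
  have hc' : (c : ℂ) ≠ 0 := by exact_mod_cast hc.ne'
  clear_value c
  -- the data
  refine ⟨fun x => (c : ℂ) * τ' (c * x),
    {s : ℂ | c * α < s.re ∧ s.re < c ∧ |s.im| < c * r},
    fun s => (c : ℂ)⁻¹ * F (s / (c : ℂ)), ?_, ?_, ?_, ?_, ?_, ?_, ?_, ?_, ?_, ?_⟩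
  -- derivative
  · intro x hx
    have hx0 : (0 : ℝ) ≤ x := hx
    have hmul : HasDerivWithinAt (fun y : ℝ => c * y) c (Ici 0) x := by
      simpa using ((hasDerivAt_id x).const_mul c).hasDerivWithinAt
    have hmaps : MapsTo (fun y : ℝ => c * y) (Ici 0) (Ici 0) :=
      fun y hy => mul_nonneg hc.le hy
    have := (hder (c * x) (mul_nonneg hc.le hx0)).scomp x hmul hmaps
    simpa [Function.comp_def, Complex.real_smul] using this
  -- continuity of g'
  · exact continuousOn_const.mul
      (hcont.comp (continuous_mul_left c).continuousOn (fun y hy => mul_nonneg hc.le hy))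
  -- g' → 0
  · have h1 : Tendsto (fun x : ℝ => c * x) atTop atTop :=
      Tendsto.const_mul_atTop hc tendsto_id
    have h2 : Tendsto (fun x : ℝ => τ' (c * x)) atTop (nhds 0) := hto0.comp h1
    simpa using h2.const_mul ((c : ℂ))
  -- g(0) = 0
  · simp [hτ0]
  -- g'(0) = 0
  · simp [hτ'0]
  -- Ω open
  · have h : {s : ℂ | c * α < s.re ∧ s.re < c ∧ |s.im| < c * r}
        = Complex.re ⁻¹' (Ioo (c * α) c) ∩ Complex.im ⁻¹' (Ioo (-(c * r)) (c * r)) := by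
      ext s
      simp only [mem_setOf_eq, mem_inter_iff, mem_preimage, mem_Ioo, abs_lt]
      tauto
    rw [h]
    exact (isOpen_Ioo.preimage Complex.continuous_re).inter
      (isOpen_Ioo.preimage Complex.continuous_im)
  -- Rbar ⊆ Ω
  · rintro s ⟨h1, h2, h3⟩
    refine ⟨?_, ?_, ?_⟩
    · have : c * α < 1 * α := mul_lt_mul_of_neg_right hc1 hα
      linarith
    · linarith
    · have : 1 * r < c * r := by
        apply mul_lt_mul_of_pos_right hc1 hr
      linarith
  -- G differentiable on Ω
  · have hmapsΩ : MapsTo (fun s : ℂ => s / (c : ℂ))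
        {s : ℂ | c * α < s.re ∧ s.re < c ∧ |s.im| < c * r} (Ropen α r) := by
      rintro s ⟨h1, h2, h3⟩
      refine ⟨?_, ?_, ?_⟩
      · rw [Complex.div_ofReal_re, lt_div_iff₀ hc]
        linarith [h1]
      · rw [Complex.div_ofReal_re, div_lt_one hc]
        exact h2
      · rw [Complex.div_ofReal_im, abs_div, abs_of_pos hc, div_lt_iff₀ hc]
        linarith [h3]
    exact DifferentiableOn.const_mul
      (hFan.comp ((differentiable_id.div_const _).differentiableOn) hmapsΩ) _
  -- G = Laplace of dilate on Ω ∩ {Re > 0}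
  · intro s hs hre
    obtain ⟨h1, h2, h3⟩ := hs
    have hmem : s / (c : ℂ) ∈ Rbar α r := by
      refine ⟨?_, ?_, ?_⟩
      · rw [Complex.div_ofReal_re, le_div_iff₀ hc]
        linarith
      · rw [Complex.div_ofReal_re, div_le_one hc]
        exact h2.le
      · rw [Complex.div_ofReal_im, abs_div, abs_of_pos hc, div_le_iff₀ hc]
        linarith
    have hre' : 0 < (s / (c : ℂ)).re := by
      rw [Complex.div_ofReal_re]
      positivity
    rw [laplace_dilate τ hc s, ← hFeq _ hmem hre']
  -- the bounds
  · refine ⟨ε / 2, ε / 2, by positivity, by positivity, by linarith, ?_, ?_⟩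
    · -- bound on derivatives
      intro x hx
      have hkey : τ' x - (c : ℂ) * τ' (c * x)
          = (τ' x - τ' (c * x)) + (1 - (c : ℂ)) * τ' (c * x) := by ring
      have hnorm1c : ‖(1 : ℂ) - (c : ℂ)‖ = lam := by
        have : (1 : ℂ) - (c : ℂ) = ((-lam : ℝ) : ℂ) := by
          push_cast [hcdef]; ring
        rw [this, Complex.norm_real]
        simp [abs_of_pos hlam]
      have hsecond : ‖(1 - (c : ℂ)) * τ' (c * x)‖ ≤ ε / 8 := by
        rw [norm_mul, hnorm1c]
        calc lam * ‖τ' (c * x)‖ ≤ lam * M := by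
              exact mul_le_mul_of_nonneg_left (hM _ (mul_nonneg hc.le hx)) hlam.le
          _ ≤ (ε / (8 * M)) * M := by
              exact mul_le_mul_of_nonneg_right hlamM.le hMpos.le
          _ = ε / 8 := by field_simp <;> ring
      have hfirst : ‖τ' x - τ' (c * x)‖ ≤ ε / 4 := by
        rcases le_or_gt x (X + 1) with h | h
        · have hx1 : x ∈ Icc (0 : ℝ) (2 * X + 2) := ⟨hx, by linarith⟩
          have hx2 : c * x ∈ Icc (0 : ℝ) (2 * X + 2) := by
            constructor
            · exact mul_nonneg hc.le hx
            · calc c * x ≤ 2 * (X + 1) := by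
                    apply mul_le_mul (by linarith) h hx (by linarith)
                _ = 2 * X + 2 := by ring
          have hdist : dist x (c * x) < δ₁ := by
            rw [Real.dist_eq]
            have : |x - c * x| = lam * x := by
              rw [hcdef]
              rw [abs_of_nonpos (by nlinarith)]
              ring
            rw [this]
            calc lam * x ≤ lam * (X + 1) :=
                  mul_le_mul_of_nonneg_left h hlam.le
              _ < (δ₁ / (X + 1)) * (X + 1) :=
                  mul_lt_mul_of_pos_right hlamδ₁ (by linarith)
              _ = δ₁ := by field_simp <;> ring
          have := hδ₁ x hx1 (c * x) hx2 hdist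
          rw [dist_eq_norm] at this
          linarith
        · have hX' : X ≤ x := by linarith
          have hX'' : X ≤ c * x := by nlinarith
          calc ‖τ' x - τ' (c * x)‖ ≤ ‖τ' x‖ + ‖τ' (c * x)‖ := norm_sub_le _ _
            _ ≤ ε / 8 + ε / 8 := by
                have := hXsmall x hX'
                have := hXsmall (c * x) hX''
                linarith
            _ = ε / 4 := by ring
      calc ‖τ' x - (c : ℂ) * τ' (c * x)‖
          ≤ ‖τ' x - τ' (c * x)‖ + ‖(1 - (c : ℂ)) * τ' (c * x)‖ := by
            rw [hkey]; exact norm_add_le _ _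
        _ ≤ ε / 4 + ε / 8 := by linarith
        _ ≤ ε / 2 := by linarith
    · -- bound on F − G
      intro s hs
      have hmem : s / (c : ℂ) ∈ Rbar α r := by
        obtain ⟨h1, h2, h3⟩ := hs
        refine ⟨?_, ?_, ?_⟩
        · rw [Complex.div_ofReal_re, le_div_iff₀ hc]
          nlinarith
        · rw [Complex.div_ofReal_re, div_le_one hc]
          linarith
        · rw [Complex.div_ofReal_im, abs_div, abs_of_pos hc, div_le_iff₀ hc]
          nlinarith [abs_nonneg s.im]
      have hMF0 : 0 ≤ MF := le_trans (norm_nonneg _) (hMF _ hmem)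
      have hkey : F s - (c : ℂ)⁻¹ * F (s / (c : ℂ))
          = (F s - F (s / (c : ℂ))) + (1 - (c : ℂ)⁻¹) * F (s / (c : ℂ)) := by ring
      have hcinv : ‖(1 : ℂ) - (c : ℂ)⁻¹‖ ≤ lam := by
        have heq : (1 : ℂ) - (c : ℂ)⁻¹ = ((lam / c : ℝ) : ℂ) := by
          push_cast
          rw [eq_div_iff hc', sub_mul, one_mul, inv_mul_cancel₀ hc', hcdef]
          push_cast
          ring
        rw [heq, Complex.norm_real, Real.norm_eq_abs, abs_of_nonneg (by positivity)]
        exact div_le_self hlam.le hc1.le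
      have hsecond : ‖(1 - (c : ℂ)⁻¹) * F (s / (c : ℂ))‖ ≤ ε / 4 := by
        rw [norm_mul]
        calc ‖(1 : ℂ) - (c : ℂ)⁻¹‖ * ‖F (s / (c : ℂ))‖ ≤ lam * MF := by
              apply mul_le_mul hcinv (hMF _ hmem) (norm_nonneg _) hlam.le
          _ ≤ (ε / (4 * (|MF| + 1))) * MF :=
              mul_le_mul_of_nonneg_right hlamMF.le hMF0
          _ ≤ (ε / (4 * (|MF| + 1))) * (|MF| + 1) := by
              apply mul_le_mul_of_nonneg_left _ (by positivity)
              linarith [le_abs_self MF]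
          _ = ε / 4 := by field_simp <;> ring
      have hfirst : ‖F s - F (s / (c : ℂ))‖ ≤ ε / 4 := by
        have hdist : dist s (s / (c : ℂ)) < δ₂ := by
          rw [dist_eq_norm]
          have h2 : ((lam : ℝ) : ℂ) = (c : ℂ) - 1 := by
            rw [hcdef]; push_cast; ring
          have heq : s - s / (c : ℂ) = s * ((lam / c : ℝ) : ℂ) := by
            push_cast
            rw [h2]
            field_simp
          rw [heq, norm_mul, Complex.norm_real, Real.norm_eq_abs,
            abs_of_nonneg (by positivity)]
          have h1 : lam / c ≤ lam := div_le_self hlam.le hc1.le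
          calc ‖s‖ * (lam / c) ≤ C * lam := by
                apply mul_le_mul (hnormC s hs) h1 (by positivity) hCpos.le
            _ < C * (δ₂ / (C + 1)) := mul_lt_mul_of_pos_left hlamδ₂ hCpos
            _ ≤ (C + 1) * (δ₂ / (C + 1)) := by
                apply mul_le_mul_of_nonneg_right (by linarith) (by positivity)
            _ = δ₂ := by field_simp <;> ring
        have := hδ₂ s hs (s / (c : ℂ)) hmem hdist
        rw [dist_eq_norm] at this
        linarith
      calc ‖F s - (c : ℂ)⁻¹ * F (s / (c : ℂ))‖
          ≤ ‖F s - F (s / (c : ℂ))‖ + ‖(1 - (c : ℂ)⁻¹) * F (s / (c : ℂ))‖ := by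
            rw [hkey]; exact norm_add_le _ _
        _ ≤ ε / 4 + ε / 4 := by linarith
        _ = ε / 2 := by ring
end

section
/- Let α < 0, r > 0, and let τ be a Schwartz function on ℝ supported in [0,∞) such that L{τ;·} has an analytic extension F to an open neighborhood of R̄_{α',r'} for some α' < α and r' > r. For h > 0 set τ_h(x) = e^{-hx}τ(x); then L{τ_h;s} has the analytic extension F_h(s) = F(s+h) near R̄_{α,r} for 0 < h < α − α', and ‖τ_h − τ‖_{α,r} := sup_{x≥0}|τ_h'(x) − τ'(x)| + sup_{s∈R̄_{α,r}}|F(s+h) − F(s)| → 0 as h → 0⁺. -/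
open Filter Set MeasureTheory

/-- For a Schwartz function `τ` supported in `[0,∞)` whose Laplace transform has
an analytic extension `F` to (an open neighborhood of `R̄_{α',r'}`) ∪ {Re s > 0},
with `α' < α < 0` and `r' > r > 0`: for `0 < h < α − α'`, `s ↦ F(s+h)` is an
analytic extension of `L{τ_h;·}` (where `τ_h(x) = e^{-hx} τ(x)`) to a
neighborhood of `R̄_{α,r}`, and `‖τ_h − τ‖_{α,r} → 0` as `h → 0⁺`. -/
theorem exponential_shift_approximation
    (α r α' r' : ℝ) (hα : α < 0) (hr : 0 < r) (hα' : α' < α) (hr' : r < r')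
    (τ : SchwartzMap ℝ ℂ) (hsupp : ∀ x : ℝ, x < 0 → τ x = 0)
    (U : Set ℂ) (hU : IsOpen U) (hUR : Rbar α' r' ⊆ U)
    (F : ℂ → ℂ)
    (hFan : DifferentiableOn ℂ F (U ∪ {s : ℂ | 0 < s.re}))
    (hFeq : ∀ s : ℂ, 0 < s.re → F s = Laplace (⇑τ) s) :
    -- (a) `F(·+h)` is an analytic extension of `L{τ_h;·}` near `R̄_{α,r}`
    (∀ h : ℝ, 0 < h → h < α - α' →
      Rbar α r ⊆ {s : ℂ | s + (h : ℂ) ∈ U ∪ {z : ℂ | 0 < z.re}} ∧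
      DifferentiableOn ℂ (fun s : ℂ => F (s + (h : ℂ)))
        {s : ℂ | s + (h : ℂ) ∈ U ∪ {z : ℂ | 0 < z.re}} ∧
      (∀ s : ℂ, 0 < s.re →
        F (s + (h : ℂ)) =
          Laplace (fun x : ℝ => Complex.exp (-((h : ℂ) * (x : ℂ))) * τ x) s)) ∧
    -- (b) `‖τ_h − τ‖_{α,r} → 0` as `h → 0⁺`
    (∀ ε : ℝ, 0 < ε → ∃ h₀ : ℝ, 0 < h₀ ∧ ∀ h : ℝ, 0 < h → h < h₀ →
      ∃ ε₁ ε₂ : ℝ, 0 ≤ ε₁ ∧ 0 ≤ ε₂ ∧ ε₁ + ε₂ < ε ∧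
        (∀ x : ℝ, 0 ≤ x →
          ‖deriv (fun y : ℝ => Complex.exp (-((h : ℂ) * (y : ℂ))) * τ y) x
            - deriv (⇑τ) x‖ ≤ ε₁) ∧
        (∀ s ∈ Rbar α r, ‖F (s + (h : ℂ)) - F s‖ ≤ ε₂)) := by
  constructor
  · -- part (a)
    intro h hh0 hhα
    refine ⟨?_, ?_, ?_⟩
    · intro s hs
      obtain ⟨h1, h2, h3⟩ := hs
      by_cases hre : 0 < (s + (h : ℂ)).re
      · exact Or.inr hre
      · push_neg at hre
        left
        refine hUR ⟨?_, ?_, ?_⟩ <;>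
          simp only [Complex.add_re, Complex.add_im, Complex.ofReal_re,
            Complex.ofReal_im, add_zero] at hre ⊢ <;>
          linarith
    · exact hFan.comp ((differentiable_id.add_const _).differentiableOn)
        (fun s hs => hs)
    · intro s hs
      have hre : 0 < (s + (h : ℂ)).re := by
        simp only [Complex.add_re, Complex.ofReal_re]; linarith
      rw [hFeq _ hre]
      unfold Laplace
      refine setIntegral_congr_fun measurableSet_Ioi fun x _ => ?_
      rw [show -((s + (h : ℂ)) * (x : ℂ)) = -((h : ℂ) * (x : ℂ)) + -(s * (x : ℂ)) by ring,
        Complex.exp_add]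
      ring
  · -- part (b)
    intro ε hε
    -- constants from Schwartz decay
    obtain ⟨C₀, hC₀pos, hC₀⟩ := τ.decay 0 0
    obtain ⟨C₁, hC₁pos, hC₁⟩ := (SchwartzMap.derivCLM ℝ ℂ τ).decay 1 0
    have hC₀' : ∀ x : ℝ, ‖τ x‖ ≤ C₀ := by
      intro x
      have := hC₀ x
      simpa [norm_iteratedFDeriv_zero] using this
    have hC₁' : ∀ x : ℝ, ‖x‖ * ‖deriv (⇑τ) x‖ ≤ C₁ := by
      intro x
      have := hC₁ x
      simpa [norm_iteratedFDeriv_zero, SchwartzMap.derivCLM_apply] using this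
    -- uniform continuity of F on a compact rectangle K
    set K : Set ℂ := {s : ℂ | α ≤ s.re ∧ s.re ≤ 2 ∧ |s.im| ≤ r} with hK
    have hKV : K ⊆ U ∪ {s : ℂ | 0 < s.re} := by
      intro s hs
      obtain ⟨h1, h2, h3⟩ := hs
      by_cases hre : s.re ≤ 1
      · exact Or.inl (hUR ⟨by linarith, hre, by linarith⟩)
      · exact Or.inr (by push_neg at hre; simp only [Set.mem_setOf_eq]; linarith)
    have hKcl : IsClosed K := by
      have : K = Complex.re ⁻¹' (Set.Icc α 2) ∩ Complex.im ⁻¹' (Set.Icc (-r) r) := by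
        ext s
        simp [hK, Set.mem_Icc, abs_le, and_assoc]
      rw [this]
      exact (isClosed_Icc.preimage Complex.continuous_re).inter
        (isClosed_Icc.preimage Complex.continuous_im)
    have hKbd : Bornology.IsBounded K := by
      apply Bornology.IsBounded.subset (Metric.isBounded_closedBall
        (x := (0 : ℂ)) (r := |α| + 2 + r))
      intro s hs
      obtain ⟨h1, h2, h3⟩ := hs
      simp only [Metric.mem_closedBall, Complex.dist_eq, sub_zero]
      calc ‖s‖ ≤ |s.re| + |s.im| := Complex.norm_le_abs_re_add_abs_im s
        _ ≤ (|α| + 2) + r := by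
            have : |s.re| ≤ |α| + 2 := by
              rw [abs_le]
              constructor
              · linarith [neg_abs_le α]
              · linarith [abs_nonneg α]
            linarith
        _ = |α| + 2 + r := by ring
    have hKcp : IsCompact K := Metric.isCompact_of_isClosed_isBounded hKcl hKbd
    have hFc : ContinuousOn F K := (hFan.continuousOn).mono hKV
    have hFuc : UniformContinuousOn F K :=
      hKcp.uniformContinuousOn_of_continuous hFc
    rw [Metric.uniformContinuousOn_iff] at hFuc
    obtain ⟨δ, hδpos, hδ⟩ := hFuc (ε / 4) (by linarith)
    refine ⟨min (min δ 1) (ε / (4 * (C₀ + C₁ + 1))), ?_, ?_⟩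
    · apply lt_min (lt_min hδpos one_pos)
      positivity
    intro h hh0 hhub
    have hhδ : h < δ := lt_of_lt_of_le hhub (le_trans (min_le_left _ _) (min_le_left _ _))
    have hh1 : h < 1 := lt_of_lt_of_le hhub (le_trans (min_le_left _ _) (min_le_right _ _))
    have hhC : h < ε / (4 * (C₀ + C₁ + 1)) := lt_of_lt_of_le hhub (min_le_right _ _)
    refine ⟨ε / 4, ε / 4, by positivity, by positivity, by linarith, ?_, ?_⟩
    · -- derivative estimate
      intro x hx
      have hτd : HasDerivAt (⇑τ) (deriv (⇑τ) x) x :=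
        (τ.differentiable x).hasDerivAt
      have hlin : HasDerivAt (fun z : ℂ => -((h : ℂ) * z)) (-(h : ℂ)) (x : ℂ) := by
        simpa using ((hasDerivAt_id (x : ℂ)).const_mul ((h : ℂ))).fun_neg
      have hexpC : HasDerivAt (fun z : ℂ => Complex.exp (-((h : ℂ) * z)))
          (Complex.exp (-((h : ℂ) * (x : ℂ))) * (-(h : ℂ))) (x : ℂ) := hlin.cexp
      have hexp : HasDerivAt (fun y : ℝ => Complex.exp (-((h : ℂ) * (y : ℂ))))
          (Complex.exp (-((h : ℂ) * (x : ℂ))) * (-(h : ℂ))) x := hexpC.comp_ofReal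
      have hg : HasDerivAt (fun y : ℝ => Complex.exp (-((h : ℂ) * (y : ℂ))) * τ y)
          (Complex.exp (-((h : ℂ) * (x : ℂ))) * (-(h : ℂ)) * τ x +
            Complex.exp (-((h : ℂ) * (x : ℂ))) * deriv (⇑τ) x) x := hexp.mul hτd
      rw [hg.deriv]
      set E : ℂ := Complex.exp (-((h : ℂ) * (x : ℂ))) with hE
      have hEr : E = ((Real.exp (-(h * x)) : ℝ) : ℂ) := by
        rw [Complex.ofReal_exp]
        push_cast
        ring_nf
        exact hE
      have hre' : (-((h : ℂ) * (x : ℂ))).re = -(h * x) := by simp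
      have hEn : ‖E‖ ≤ 1 := by
        rw [hE, Complex.norm_exp, hre', Real.exp_le_one_iff]
        nlinarith
      have hexple : Real.exp (-(h * x)) ≤ 1 :=
        Real.exp_le_one_iff.mpr (by nlinarith)
      have hE1 : ‖E - 1‖ ≤ h * x := by
        rw [hEr, show ((Real.exp (-(h * x)) : ℝ) : ℂ) - 1
            = ((Real.exp (-(h * x)) - 1 : ℝ) : ℂ) by push_cast; ring]
        rw [Complex.norm_real, Real.norm_eq_abs, abs_of_nonpos (by linarith)]
        have := Real.add_one_le_exp (-(h * x))
        linarith
      have key : E * (-(h : ℂ)) * τ x + E * deriv (⇑τ) x - deriv (⇑τ) x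
          = E * (-(h : ℂ)) * τ x + (E - 1) * deriv (⇑τ) x := by ring
      rw [key]
      calc ‖E * (-(h : ℂ)) * τ x + (E - 1) * deriv (⇑τ) x‖
          ≤ ‖E * (-(h : ℂ)) * τ x‖ + ‖(E - 1) * deriv (⇑τ) x‖ := norm_add_le _ _
        _ = ‖E‖ * h * ‖τ x‖ + ‖E - 1‖ * ‖deriv (⇑τ) x‖ := by
            rw [norm_mul, norm_mul, norm_mul]
            simp [abs_of_pos hh0]
        _ ≤ 1 * h * C₀ + (h * x) * ‖deriv (⇑τ) x‖ := by
            have h1 : ‖E‖ * h * ‖τ x‖ ≤ 1 * h * C₀ := by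
              have hb := hC₀' x
              have hn1 : (0:ℝ) ≤ ‖τ x‖ := norm_nonneg _
              have a1 : ‖E‖ * h ≤ 1 * h := by nlinarith
              calc ‖E‖ * h * ‖τ x‖ ≤ 1 * h * ‖τ x‖ :=
                    mul_le_mul_of_nonneg_right a1 hn1
                _ ≤ 1 * h * C₀ := by nlinarith
            have h2 : ‖E - 1‖ * ‖deriv (⇑τ) x‖ ≤ (h * x) * ‖deriv (⇑τ) x‖ :=
              mul_le_mul_of_nonneg_right hE1 (norm_nonneg _)
            linarith
        _ ≤ h * C₀ + h * C₁ := by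
            have : x * ‖deriv (⇑τ) x‖ ≤ C₁ := by
              have := hC₁' x
              rwa [Real.norm_eq_abs, abs_of_nonneg hx] at this
            nlinarith
        _ = h * (C₀ + C₁) := by ring
        _ ≤ ε / 4 := by
            rw [lt_div_iff₀ (by positivity)] at hhC
            nlinarith [hh0.le]
    · -- uniform continuity estimate
      intro s hs
      obtain ⟨h1, h2, h3⟩ := hs
      have hsK : s ∈ K := ⟨h1, by linarith, h3⟩
      have hshK : s + (h : ℂ) ∈ K := by
        refine ⟨?_, ?_, ?_⟩ <;>
          simp only [Complex.add_re, Complex.add_im, Complex.ofReal_re,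
            Complex.ofReal_im, add_zero] <;> [linarith; linarith; exact h3]
      have hdist : dist (s + (h : ℂ)) s < δ := by
        rw [Complex.dist_eq]
        simp only [add_sub_cancel_left]
        rw [Complex.norm_real, Real.norm_eq_abs, abs_of_pos hh0]
        exact hhδ
      have := hδ (s + (h : ℂ)) hshK s hsK hdist
      rw [Complex.dist_eq] at this
      exact le_of_lt this
end

section
/- Let ρ : [0,∞) → (0,∞) be a function with ρ(x) → 0 as x → ∞. Then there exist L ∈ C¹[0,∞) and an angle ϑ ∈ (0, π/2) such that lim_{x→∞} L(x) = lim_{x→∞} L'(x) = 0, ρ(x) = o(L(x)) as x → ∞, and L{L;·} has an analytic extension to the open sector {s ∈ ℂ \ {0} : −π + ϑ < arg s < π − ϑ}. -/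
open Filter Set MeasureTheory Asymptotics


lemma aux_geo : Summable (fun n : ℕ => (1/2:ℝ)^n) :=
  summable_geometric_of_lt_one (by norm_num) (by norm_num)

lemma aux_summable_f {b : ℕ → ℝ} (hbpos : ∀ n, 0 < b n) (hble : ∀ n, b n ≤ 1)
    (x : ℝ) (hx : x ∈ Set.Ioi (-2:ℝ)) :
    Summable (fun n => (1/2:ℝ)^n * Real.exp (-b n * x)) := by
  apply Summable.of_nonneg_of_le (fun n => by positivity)
    (fun n => ?_) (aux_geo.mul_left (Real.exp 2))
  have h1 : -b n * x ≤ 2 := by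
    have hx' : -x ≤ 2 := by simp only [Set.mem_Ioi] at hx; linarith
    have := (hbpos n).le
    have := hble n
    nlinarith
  calc (1/2:ℝ)^n * Real.exp (-b n * x) ≤ (1/2:ℝ)^n * Real.exp 2 := by
        have := Real.exp_le_exp.mpr h1
        gcongr
    _ = Real.exp 2 * (1/2)^n := by ring

lemma aux_bound_f' {b : ℕ → ℝ} (hbpos : ∀ n, 0 < b n) (hble : ∀ n, b n ≤ 1)
    (n : ℕ) (x : ℝ) (hx : x ∈ Set.Ioi (-2:ℝ)) :
    ‖(1/2:ℝ)^n * (-b n * Real.exp (-b n * x))‖ ≤ Real.exp 2 * (1/2)^n := by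
  have h1 : -b n * x ≤ 2 := by
    have hx' : -x ≤ 2 := by simp only [Set.mem_Ioi] at hx; linarith
    have := (hbpos n).le
    have := hble n
    nlinarith
  have h2 : 0 < b n := hbpos n
  rw [Real.norm_eq_abs, abs_mul, abs_mul, abs_neg, abs_of_pos h2, abs_of_pos (by positivity),
    abs_of_pos (Real.exp_pos _)]
  have h6 : b n * Real.exp (-b n * x) ≤ Real.exp 2 := by
    have h3 := Real.exp_le_exp.mpr h1
    have h4 := hble n
    have h5 := Real.exp_pos (-b n * x)
    nlinarith
  calc (1/2:ℝ)^n * (b n * Real.exp (-b n * x)) ≤ (1/2:ℝ)^n * Real.exp 2 := by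
        have h7 : (0:ℝ) ≤ (1/2:ℝ)^n := by positivity
        exact mul_le_mul_of_nonneg_left h6 h7
    _ = Real.exp 2 * (1/2)^n := by ring

lemma aux_hasDerivAt (b : ℕ → ℝ) (n : ℕ) (x : ℝ) :
    HasDerivAt (fun y => (1/2:ℝ)^n * Real.exp (-b n * y))
      ((1/2:ℝ)^n * (-b n * Real.exp (-b n * x))) x := by
  have h := (((hasDerivAt_id x).const_mul (-b n)).exp).const_mul ((1/2:ℝ)^n)
  refine h.congr_deriv ?_
  simp only [id_eq]
  ring

lemma aux_L_hasDerivAt {b : ℕ → ℝ} (hbpos : ∀ n, 0 < b n) (hble : ∀ n, b n ≤ 1)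
    (x : ℝ) (hx : x ∈ Set.Ioi (-2:ℝ)) :
    HasDerivAt (fun y => ∑' n, (1/2:ℝ)^n * Real.exp (-b n * y))
      (∑' n, (1/2:ℝ)^n * (-b n * Real.exp (-b n * x))) x := by
  refine hasDerivAt_of_tendstoUniformlyOn
    (f := fun (t : Finset ℕ) (y : ℝ) => ∑ n ∈ t, (1/2:ℝ)^n * Real.exp (-b n * y))
    (f' := fun (t : Finset ℕ) (y : ℝ) => ∑ n ∈ t, (1/2:ℝ)^n * (-b n * Real.exp (-b n * y)))
    (isOpen_Ioi (a := (-2:ℝ)))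
    (tendstoUniformlyOn_tsum (aux_geo.mul_left (Real.exp 2))
      (fun n y hy => aux_bound_f' hbpos hble n y hy))
    ?_ ?_ hx
  · filter_upwards with t y hy
    exact HasDerivAt.fun_sum fun n _ => aux_hasDerivAt b n y
  · intro y hy
    exact (aux_summable_f hbpos hble y hy).hasSum



lemma aux_integral_cexp {c : ℂ} (hc : 0 < c.re) :
    ∫ x in Set.Ioi (0:ℝ), Complex.exp (-(c * x)) = c⁻¹ := by
  have hc0 : c ≠ 0 := fun h => by simp [h] at hc
  have hd : ∀ x ∈ Set.Ioi (0:ℝ), HasDerivAt (fun x : ℝ => -c⁻¹ * Complex.exp (-(c * x)))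
      (Complex.exp (-(c * x))) x := by
    intro x _
    have h2 : HasDerivAt (fun z : ℂ => -(c * z)) (-c) (x:ℂ) := by
      simpa [Pi.neg_def] using ((hasDerivAt_id (x:ℂ)).const_mul c).neg
    have h1 : HasDerivAt (fun z : ℂ => -c⁻¹ * Complex.exp (-(c * z)))
        (Complex.exp (-(c * (x:ℂ)))) (x : ℂ) := by
      have := (h2.cexp).const_mul (-c⁻¹)
      refine this.congr_deriv ?_
      field_simp
    exact h1.comp_ofReal
  have hcontle : Continuous (fun x : ℝ => Complex.exp (-(c * x))) := by
    fun_prop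
  have hnorm : ∀ x : ℝ, ‖Complex.exp (-(c * x))‖ = Real.exp (-c.re * x) := by
    intro x
    rw [Complex.norm_exp]
    congr 1
    simp [Complex.mul_re]
  have hint : MeasureTheory.IntegrableOn (fun x : ℝ => Complex.exp (-(c * x))) (Set.Ioi 0) := by
    apply MeasureTheory.Integrable.mono' (exp_neg_integrableOn_Ioi 0 hc)
    · exact hcontle.aestronglyMeasurable
    · filter_upwards with x
      rw [hnorm]
  have hten : Tendsto (fun x : ℝ => -c⁻¹ * Complex.exp (-(c * x))) atTop (nhds 0) := by
    rw [tendsto_zero_iff_norm_tendsto_zero]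
    have : (fun x : ℝ => ‖-c⁻¹ * Complex.exp (-(c * x))‖)
        = fun x : ℝ => ‖c⁻¹‖ * Real.exp (-c.re * x) := by
      funext x; rw [norm_mul, norm_neg, hnorm]
    rw [this]
    have : Tendsto (fun x : ℝ => Real.exp (-c.re * x)) atTop (nhds 0) := by
      apply Real.tendsto_exp_atBot.comp
      exact Tendsto.const_mul_atTop_of_neg (by linarith) tendsto_id
    simpa using this.const_mul ‖c⁻¹‖
  have := integral_Ioi_of_hasDerivAt_of_tendsto
    (f := fun x : ℝ => -c⁻¹ * Complex.exp (-(c * x))) (a := 0) ((continuous_const.mul hcontle).continuousWithinAt) hd hint hten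
  rw [this]
  simp

lemma aux_integral_exp {a : ℝ} (ha : 0 < a) :
    ∫ x in Set.Ioi (0:ℝ), Real.exp (-a * x) = a⁻¹ := by
  have ha0 : a ≠ 0 := ne_of_gt ha
  have hd : ∀ x ∈ Set.Ioi (0:ℝ), HasDerivAt (fun x : ℝ => -a⁻¹ * Real.exp (-a * x))
      (Real.exp (-a * x)) x := by
    intro x _
    have h := (((hasDerivAt_id x).const_mul (-a)).exp).const_mul (-a⁻¹)
    refine h.congr_deriv ?_
    simp only [id_eq]
    field_simp
  have hten : Tendsto (fun x : ℝ => -a⁻¹ * Real.exp (-a * x)) atTop (nhds 0) := by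
    have h2 : Tendsto (fun x : ℝ => Real.exp (-a * x)) atTop (nhds 0) :=
      Real.tendsto_exp_atBot.comp (Tendsto.const_mul_atTop_of_neg (by linarith) tendsto_id)
    simpa using h2.const_mul (-a⁻¹)
  have := integral_Ioi_of_hasDerivAt_of_tendsto
    (f := fun x : ℝ => -a⁻¹ * Real.exp (-a * x)) (a := 0)
    ((continuous_const.mul (Real.continuous_exp.comp (continuous_const.mul continuous_id))).continuousWithinAt)
    hd (exp_neg_integrableOn_Ioi 0 ha) hten
  rw [this]
  simp

lemma aux_nmem {b : ℕ → ℝ} (hbpos : ∀ n, 0 < b n) (n : ℕ) :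
    (-(b n : ℂ)) ∉ Complex.slitPlane := by
  rw [Complex.mem_slitPlane_iff]
  push_neg
  constructor
  · simp only [Complex.neg_re, Complex.ofReal_re]
    linarith [hbpos n]
  · simp

lemma aux_ne_zero {b : ℕ → ℝ} (hbpos : ∀ n, 0 < b n) {z : ℂ}
    (hz : z ∈ Complex.slitPlane) (n : ℕ) : z + (b n : ℂ) ≠ 0 := by
  intro h
  have hzz : z = -(b n : ℂ) := by linear_combination h
  exact aux_nmem hbpos n (hzz ▸ hz)

lemma aux_F_diff {b : ℕ → ℝ} (hbpos : ∀ n, 0 < b n) :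
    DifferentiableOn ℂ (fun s => ∑' n, (1/2:ℂ)^n * (s + (b n : ℂ))⁻¹) Complex.slitPlane := by
  apply TendstoLocallyUniformlyOn.differentiableOn (φ := (atTop : Filter (Finset ℕ)))
    (F := fun (t : Finset ℕ) (z : ℂ) => ∑ n ∈ t, (1/2:ℂ)^n * (z + (b n : ℂ))⁻¹)
  · rw [tendstoLocallyUniformlyOn_iff_forall_isCompact Complex.isOpen_slitPlane]
    intro K hK hKc
    rcases K.eq_empty_or_nonempty with rfl | hKne
    · exact tendstoUniformlyOn_empty
    obtain ⟨z₀, hz₀K, hmin⟩ := hKc.exists_isMinOn hKne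
      ((Metric.continuous_infDist_pt Complex.slitPlaneᶜ).continuousOn)
    set δ := Metric.infDist z₀ Complex.slitPlaneᶜ with hδdef
    have hδ : 0 < δ := by
      refine (IsClosed.notMem_iff_infDist_pos Complex.isOpen_slitPlane.isClosed_compl
        ⟨0, ?_⟩).mp ?_
      · simp [Complex.mem_slitPlane_iff]
      · simpa using hK hz₀K
    apply tendstoUniformlyOn_tsum (u := fun n => (1/2:ℝ)^n * δ⁻¹) (aux_geo.mul_right δ⁻¹)
    intro n z hz
    have h1 : δ ≤ ‖z + (b n:ℂ)‖ := by
      have h2 : Metric.infDist z Complex.slitPlaneᶜ ≤ dist z (-(b n : ℂ)) :=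
        Metric.infDist_le_dist_of_mem (by simpa using aux_nmem hbpos n)
      have h3 := hmin hz
      rw [dist_eq_norm, show z - -(b n:ℂ) = z + (b n:ℂ) from by ring] at h2
      exact le_trans h3 h2
    rw [norm_mul, norm_pow, norm_inv]
    rw [show ‖(1/2:ℂ)‖ = (1/2:ℝ) from by norm_num]
    exact mul_le_mul_of_nonneg_left (inv_anti₀ hδ h1) (by positivity)
  · filter_upwards with t
    apply DifferentiableOn.fun_sum
    intro n _
    exact ((differentiableOn_id.add_const _).inv
      (fun z hz => aux_ne_zero hbpos hz n)).const_mul _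
  · exact Complex.isOpen_slitPlane

lemma aux_laplace {b : ℕ → ℝ} (hbpos : ∀ n, 0 < b n) (hble : ∀ n, b n ≤ 1)
    (s : ℂ) (hs : 0 < s.re) :
    (∫ x in Set.Ioi (0:ℝ), ((∑' n, (1/2:ℝ)^n * Real.exp (-b n * x) : ℝ) : ℂ)
        * Complex.exp (-(s * x)))
      = ∑' n, (1/2:ℂ)^n * (s + (b n:ℂ))⁻¹ := by
  set g : ℕ → ℝ → ℂ := fun n x => (1/2:ℂ)^n * Complex.exp (-((s + (b n:ℂ)) * x)) with hg
  have hre : ∀ n, 0 < (s + (b n:ℂ)).re := by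
    intro n
    simp only [Complex.add_re, Complex.ofReal_re]
    linarith [hbpos n]
  have hgnorm : ∀ n (x:ℝ), ‖g n x‖ = (1/2:ℝ)^n * Real.exp (-(s.re + b n) * x) := by
    intro n x
    rw [hg]
    simp only []
    rw [norm_mul, norm_pow, show ‖(1/2:ℂ)‖ = (1/2:ℝ) from by norm_num,
      Complex.norm_exp]
    congr 2
    simp [Complex.neg_re, Complex.mul_re, Complex.ofReal_re, Complex.ofReal_im, Complex.add_re,
      Complex.add_im]
    ring
  have hEq : ∀ x ∈ Set.Ioi (0:ℝ),
      ((∑' n, (1/2:ℝ)^n * Real.exp (-b n * x) : ℝ):ℂ) * Complex.exp (-(s*x)) = ∑' n, g n x := by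
    intro x _
    rw [Complex.ofReal_tsum, ← tsum_mul_right]
    apply tsum_congr
    intro n
    rw [hg]
    simp only []
    push_cast
    rw [mul_assoc, ← Complex.exp_add]
    congr 1
    push_cast
    ring_nf
  rw [setIntegral_congr_fun measurableSet_Ioi hEq]
  have hcont : ∀ n, Continuous (g n) := by
    intro n
    apply Continuous.mul continuous_const
    exact Complex.continuous_exp.comp (by fun_prop)
  rw [MeasureTheory.integral_tsum (fun n => (hcont n).aestronglyMeasurable) ?_]
  · apply tsum_congr
    intro n
    rw [hg]
    simp only []
    rw [MeasureTheory.integral_const_mul, aux_integral_cexp (hre n)]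
  · -- ∑' n, ∫⁻ ‖g n x‖₊ ≠ ⊤
    have key : ∀ n, ∫⁻ x in Set.Ioi (0:ℝ), ‖g n x‖₊
        ≤ ENNReal.ofReal ((1/2:ℝ)^n * (s.re)⁻¹) := by
      intro n
      have hint : MeasureTheory.IntegrableOn
          (fun x : ℝ => (1/2:ℝ)^n * Real.exp (-s.re * x)) (Set.Ioi 0) :=
        (exp_neg_integrableOn_Ioi 0 hs).const_mul _
      calc ∫⁻ x in Set.Ioi (0:ℝ), ‖g n x‖₊
          = ∫⁻ x in Set.Ioi (0:ℝ), ENNReal.ofReal ((1/2:ℝ)^n * Real.exp (-(s.re + b n) * x)) := by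
            apply lintegral_congr
            intro x
            rw [← enorm_eq_nnnorm, ← ofReal_norm, hgnorm]
        _ ≤ ∫⁻ x in Set.Ioi (0:ℝ), ENNReal.ofReal ((1/2:ℝ)^n * Real.exp (-s.re * x)) := by
            apply lintegral_mono_ae
            filter_upwards [ae_restrict_mem measurableSet_Ioi] with x hx
            apply ENNReal.ofReal_le_ofReal
            have hx' : (0:ℝ) < x := hx
            have h1 : -(s.re + b n) * x ≤ -s.re * x := by nlinarith [hbpos n]
            have h2 := Real.exp_le_exp.mpr h1
            have h3 : (0:ℝ) ≤ (1/2:ℝ)^n := by positivity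
            exact mul_le_mul_of_nonneg_left h2 h3
        _ = ENNReal.ofReal (∫ x in Set.Ioi (0:ℝ), (1/2:ℝ)^n * Real.exp (-s.re * x)) :=
            (ofReal_integral_eq_lintegral_ofReal hint
              (ae_of_all _ fun x => by positivity)).symm
        _ = ENNReal.ofReal ((1/2:ℝ)^n * (s.re)⁻¹) := by
            rw [MeasureTheory.integral_const_mul, aux_integral_exp hs]
    have hsum2 : Summable (fun n => (1/2:ℝ)^n * (s.re)⁻¹) := aux_geo.mul_right _
    apply LT.lt.ne
    calc ∑' n, ∫⁻ x in Set.Ioi (0:ℝ), ‖g n x‖₊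
        ≤ ∑' n, ENNReal.ofReal ((1/2:ℝ)^n * (s.re)⁻¹) := ENNReal.tsum_le_tsum key
      _ = ENNReal.ofReal (∑' n, (1/2:ℝ)^n * (s.re)⁻¹) :=
          (ENNReal.ofReal_tsum_of_nonneg (fun n => by positivity) hsum2).symm
      _ < ⊤ := ENNReal.ofReal_lt_top

/-- Majorization lemma: for any positive `ρ` with `ρ(x) → 0` there exist
`L ∈ C¹[0,∞)` with `L(x) → 0`, `L'(x) → 0`, `ρ(x) = o(L(x))`, and an angle
`ϑ ∈ (0, π/2)` such that `L{L;·}` has an analytic extension to the sector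
`{s ≠ 0 : −π + ϑ < arg s < π − ϑ}`. -/
theorem majorant_with_sector_extension
    (ρ : ℝ → ℝ) (hρpos : ∀ x : ℝ, 0 ≤ x → 0 < ρ x)
    (hρ0 : Tendsto ρ atTop (nhds 0)) :
    ∃ (L L' : ℝ → ℝ) (ϑ : ℝ),
      (∀ x ∈ Set.Ici (0 : ℝ), HasDerivWithinAt L (L' x) (Set.Ici 0) x) ∧
      ContinuousOn L' (Set.Ici 0) ∧
      Tendsto L atTop (nhds 0) ∧
      Tendsto L' atTop (nhds 0) ∧
      ρ =o[atTop] L ∧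
      0 < ϑ ∧ ϑ < Real.pi / 2 ∧
      ∃ F : ℂ → ℂ,
        DifferentiableOn ℂ F
          {s : ℂ | s ≠ 0 ∧ -(Real.pi - ϑ) < s.arg ∧ s.arg < Real.pi - ϑ} ∧
        ∀ s : ℂ, 0 < s.re → F s = Laplace (fun x : ℝ => ((L x : ℝ) : ℂ)) s := by
  -- Step 1: thresholds
  have hthr : ∀ n : ℕ, ∃ X : ℝ, ∀ x : ℝ, X ≤ x → |ρ x| < (1/4 : ℝ)^n := by
    intro n
    obtain ⟨N, hN⟩ := Metric.tendsto_atTop.mp hρ0 ((1/4:ℝ)^n) (by positivity)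
    exact ⟨N, fun x hx => by simpa [Real.dist_eq] using hN x hx⟩
  choose X hX using hthr
  -- Step 2: the sequence xs
  set xs : ℕ → ℝ := fun n => Nat.rec (max (X 0) 1) (fun k xk => max (X (k+1)) (xk + 1)) n
    with hxs_def
  have hxsS : ∀ n, xs (n+1) = max (X (n+1)) (xs n + 1) := fun n => rfl
  have hxsX : ∀ n, X n ≤ xs n := by
    intro n
    cases n with
    | zero => exact le_max_left _ _
    | succ m => rw [hxsS]; exact le_max_left _ _
  have hxsStep : ∀ n, xs n + 1 ≤ xs (n+1) := by
    intro n; rw [hxsS]; exact le_max_right _ _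
  have hxs1 : ∀ n, 1 ≤ xs n := by
    intro n
    induction n with
    | zero => exact le_max_right _ _
    | succ m ih => have := hxsStep m; linarith
  have hmono : StrictMono xs :=
    strictMono_nat_of_lt_succ (fun n => lt_of_lt_of_le (lt_add_one _) (hxsStep n))
  have hxsge : ∀ n : ℕ, (n:ℝ) + 1 ≤ xs n := by
    intro n
    induction n with
    | zero => simpa using hxs1 0
    | succ m ih => have := hxsStep m; push_cast; push_cast at ih; linarith
  -- Step 3: the decay rates b
  set b : ℕ → ℝ := fun n => (xs (n+1))⁻¹ with hb_def
  have hxspos : ∀ n, 0 < xs n := fun n => lt_of_lt_of_le one_pos (hxs1 n)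
  have hbpos : ∀ n, 0 < b n := fun n => inv_pos.mpr (hxspos (n+1))
  have hble : ∀ n, b n ≤ 1 := fun n => inv_le_one_of_one_le₀ (hxs1 (n+1))
  -- Step 4: L and L'
  set L : ℝ → ℝ := fun x => ∑' n, (1/2:ℝ)^n * Real.exp (-b n * x) with hL_def
  set L' : ℝ → ℝ := fun x => ∑' n, (1/2:ℝ)^n * (-b n * Real.exp (-b n * x)) with hL'_def
  have hsub : Set.Ici (0:ℝ) ⊆ Set.Ioi (-2:ℝ) := fun x hx =>
    lt_of_lt_of_le (by norm_num : (-2:ℝ) < 0) hx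
  refine ⟨L, L', Real.pi/4, ?_, ?_, ?_, ?_, ?_, ?_, ?_, ?_⟩
  · -- derivative
    intro x hx
    exact (aux_L_hasDerivAt hbpos hble x (hsub hx)).hasDerivWithinAt
  · -- continuity of L'
    apply ContinuousOn.mono (s := Set.Ioi (-2:ℝ)) ?_ hsub
    apply continuousOn_tsum (fun n => (Continuous.continuousOn (by fun_prop)))
      (aux_geo.mul_left (Real.exp 2))
    exact fun n x hx => aux_bound_f' hbpos hble n x hx
  · -- L → 0
    have h := tendsto_tsum_of_dominated_convergence (𝓕 := atTop)
      (f := fun (x:ℝ) (n:ℕ) => (1/2:ℝ)^n * Real.exp (-b n * x)) (g := fun _ => (0:ℝ))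
      (bound := fun n => (1/2:ℝ)^n) aux_geo ?_ ?_
    · rw [tsum_zero] at h
      exact h
    · intro k
      have h2 : Tendsto (fun x : ℝ => Real.exp (-b k * x)) atTop (nhds 0) :=
        Real.tendsto_exp_atBot.comp
          (Tendsto.const_mul_atTop_of_neg (by linarith [hbpos k]) tendsto_id)
      simpa using h2.const_mul ((1/2:ℝ)^k)
    · filter_upwards [eventually_ge_atTop (0:ℝ)] with x hx
      intro k
      have h1 : Real.exp (-b k * x) ≤ 1 := by
        rw [Real.exp_le_one_iff]
        have := (hbpos k).le
        nlinarith
      rw [Real.norm_eq_abs, abs_mul, abs_of_pos (by positivity), abs_of_pos (Real.exp_pos _)]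
      nlinarith [Real.exp_pos (-b k * x), pow_pos (by norm_num : (0:ℝ) < 1/2) k]
  · -- L' → 0
    have h := tendsto_tsum_of_dominated_convergence (𝓕 := atTop)
      (f := fun (x:ℝ) (n:ℕ) => (1/2:ℝ)^n * (-b n * Real.exp (-b n * x))) (g := fun _ => (0:ℝ))
      (bound := fun n => (1/2:ℝ)^n) aux_geo ?_ ?_
    · rw [tsum_zero] at h
      exact h
    · intro k
      have h2 : Tendsto (fun x : ℝ => Real.exp (-b k * x)) atTop (nhds 0) :=
        Real.tendsto_exp_atBot.comp
          (Tendsto.const_mul_atTop_of_neg (by linarith [hbpos k]) tendsto_id)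
      have h3 := h2.const_mul ((1/2:ℝ)^k * (-b k))
      simp only [mul_zero] at h3
      apply h3.congr'
      filter_upwards with x
      ring
    · filter_upwards [eventually_ge_atTop (0:ℝ)] with x hx
      intro k
      have h1 : Real.exp (-b k * x) ≤ 1 := by
        rw [Real.exp_le_one_iff]
        have := (hbpos k).le
        nlinarith
      have hb1 := hbpos k
      have hb2 := hble k
      have he := Real.exp_pos (-b k * x)
      rw [Real.norm_eq_abs, abs_mul, abs_mul, abs_neg, abs_of_pos hb1,
        abs_of_pos (by positivity : (0:ℝ) < (1/2:ℝ)^k), abs_of_pos he]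
      have h6 : b k * Real.exp (-b k * x) ≤ 1 := by nlinarith
      calc (1/2:ℝ)^k * (b k * Real.exp (-b k * x)) ≤ (1/2:ℝ)^k * 1 :=
            mul_le_mul_of_nonneg_left h6 (by positivity)
        _ = (1/2:ℝ)^k := mul_one _
  · -- little o
    rw [isLittleO_iff]
    intro c hc
    obtain ⟨N, hN⟩ := exists_pow_lt_of_lt_one (div_pos hc (Real.exp_pos 1))
      (by norm_num : (1/2:ℝ) < 1)
    filter_upwards [eventually_ge_atTop (xs N)] with x hx
    have hx0 : (0:ℝ) ≤ x := le_trans (by linarith [hxs1 N]) hx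
    have hP : ∃ k, x < xs (k+1) := by
      refine ⟨⌈x⌉₊, ?_⟩
      have h1 := hxsge (⌈x⌉₊ + 1)
      have h2 := Nat.le_ceil x
      push_cast at h1
      linarith
    set n := Nat.find hP with hn_def
    have h1 : x < xs (n+1) := Nat.find_spec hP
    have h2 : xs n ≤ x := by
      rcases Nat.eq_zero_or_pos n with h | h
      · rw [h]
        exact le_trans (hmono.monotone (Nat.zero_le N)) hx
      · obtain ⟨m, hm⟩ := Nat.exists_eq_succ_of_ne_zero h.ne'
        have hmin := Nat.find_min hP (m := m) (by omega)
        push_neg at hmin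
        rw [hm]
        exact hmin
    have h3 : N ≤ n := by
      by_contra h
      push_neg at h
      have h4 : xs (n+1) ≤ xs N := hmono.monotone h
      linarith
    have hbeq : b n = (xs (n+1))⁻¹ := rfl
    have hbx : b n * x ≤ 1 := by
      have h5 := hxspos (n+1)
      rw [hbeq]
      calc (xs (n+1))⁻¹ * x ≤ (xs (n+1))⁻¹ * xs (n+1) :=
            mul_le_mul_of_nonneg_left h1.le (by positivity)
        _ = 1 := inv_mul_cancel₀ (ne_of_gt h5)
    have hLlow : (1/2:ℝ)^n * Real.exp (-1) ≤ L x := by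
      have hterm : (1/2:ℝ)^n * Real.exp (-1) ≤ (1/2:ℝ)^n * Real.exp (-b n * x) := by
        apply mul_le_mul_of_nonneg_left _ (by positivity)
        apply Real.exp_le_exp.mpr
        nlinarith
      exact le_trans hterm (Summable.le_tsum (aux_summable_f hbpos hble x (hsub hx0))
        n (fun m _ => by positivity))
    have hLpos : 0 < L x := lt_of_lt_of_le (by positivity) hLlow
    have hρx : |ρ x| < (1/4:ℝ)^n := hX n x (le_trans (hxsX n) h2)
    have hA : (1/2:ℝ)^n ≤ Real.exp 1 * L x := by
      rw [Real.exp_neg] at hLlow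
      have hE := Real.exp_pos 1
      calc (1/2:ℝ)^n = Real.exp 1 * ((1/2:ℝ)^n * (Real.exp 1)⁻¹) := by field_simp
        _ ≤ Real.exp 1 * L x := mul_le_mul_of_nonneg_left hLlow hE.le
    have hB : (1/2:ℝ)^n ≤ c / Real.exp 1 :=
      le_of_lt (lt_of_le_of_lt (pow_le_pow_of_le_one (by norm_num) (by norm_num) h3) hN)
    rw [Real.norm_eq_abs, Real.norm_eq_abs, abs_of_pos hLpos]
    calc |ρ x| ≤ (1/4:ℝ)^n := hρx.le
      _ = (1/2:ℝ)^n * (1/2:ℝ)^n := by rw [← mul_pow]; norm_num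
      _ ≤ (c / Real.exp 1) * (Real.exp 1 * L x) :=
          mul_le_mul hB hA (by positivity) (by positivity)
      _ = c * L x := by
          field_simp
  · positivity
  · have := Real.pi_pos; linarith
  · -- analytic extension
    refine ⟨fun z => ∑' n, (1/2:ℂ)^n * (z + (b n : ℂ))⁻¹, ?_, ?_⟩
    · apply (aux_F_diff hbpos).mono
      intro z hz
      obtain ⟨hz0, h1, h2⟩ := hz
      rw [Complex.mem_slitPlane_iff_arg]
      refine ⟨?_, hz0⟩
      have := Real.pi_pos
      intro h
      rw [h] at h2
      linarith
    · intro s hs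
      rw [Laplace]
      exact (aux_laplace hbpos hble s hs).symm
end

section
/- Let L ∈ C¹[0,∞) with L(x) → 0 and L'(x) → 0 as x → ∞, and suppose L{L;·} has an analytic extension to a sector {s ∈ ℂ \ {0} : −π + ϑ < arg s < π − ϑ} for some ϑ ∈ (0, π/2). Fix α < 0 and r > 0, and set L_b(x) = L(x) sin(bx) for b > 0. Then there exists M > 0 such that for every b ≥ M the function L_b belongs to V_{α,r} — i.e., L_b ∈ C¹[0,∞), L_b'(x) → 0, and L{L_b;s} = (1/2i)(L{L;s−ib} − L{L;s+ib}) has analytic extension F_b to R_{α,r} continuous on R̄_{α,r} — and moreover sup_{b∈[M,M+1]} ( sup_{x≥0}|L_b'(x)| + sup_{s∈R̄_{α,r}} |F_b(s)| ) < ∞. -/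
open Filter Set MeasureTheory

lemma aux_sector {ϑ α : ℝ} (hϑ0 : 0 < ϑ) (hϑπ : ϑ < Real.pi / 2) {z : ℂ}
    (h1 : α ≤ z.re) (h3 : |α| + 1 ≤ Real.cos ϑ * |z.im|) :
    z ≠ 0 ∧ -(Real.pi - ϑ) < z.arg ∧ z.arg < Real.pi - ϑ := by
  have hc : 0 < Real.cos ϑ := Real.cos_pos_of_mem_Ioo ⟨by linarith [Real.pi_pos], hϑπ⟩
  have him : 0 < |z.im| := by nlinarith [abs_nonneg α]
  have hz : z ≠ 0 := by
    intro h; rw [h] at him; simp at him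
  have habs : 0 < ‖z‖ := by simpa using hz
  have himle : |z.im| ≤ ‖z‖ := Complex.abs_im_le_norm z
  have hre : -Real.cos ϑ * ‖z‖ < z.re := by
    nlinarith [abs_nonneg α, neg_abs_le α]
  have hcos : Real.cos (Real.pi - ϑ) < Real.cos z.arg := by
    rw [Real.cos_pi_sub, Complex.cos_arg hz]
    rw [lt_div_iff₀ habs]
    linarith
  have harg : |z.arg| < Real.pi - ϑ := by
    by_contra hcon
    push_neg at hcon
    have := Real.cos_le_cos_of_nonneg_of_le_pi (by linarith [Real.pi_pos])
      (Complex.abs_arg_le_pi z) hcon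
    rw [Real.cos_abs] at this
    linarith
  exact ⟨hz, by rw [abs_lt] at harg; exact ⟨harg.1, harg.2⟩⟩

lemma aux_bdd {f : ℝ → ℝ} (hc : ContinuousOn f (Ici 0)) (h : Tendsto f atTop (nhds 0)) :
    ∃ A : ℝ, 0 ≤ A ∧ ∀ x : ℝ, 0 ≤ x → |f x| ≤ A := by
  have h1 : ∀ᶠ x in atTop, |f x| < 1 := by
    have := h.abs
    simp only [abs_zero] at this
    exact this.eventually (gt_mem_nhds one_pos)
  obtain ⟨X, hX⟩ := eventually_atTop.1 h1
  set X' := max X 0 with hX'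
  obtain ⟨C, hC⟩ := (isCompact_Icc (a := (0:ℝ)) (b := X')).exists_bound_of_continuousOn
    (hc.mono (fun x hx => hx.1))
  refine ⟨max C 1, le_trans zero_le_one (le_max_right _ _), fun x hx => ?_⟩
  rcases le_total x X' with h'|h'
  · exact le_trans (hC x ⟨hx, h'⟩) (le_max_left _ _)
  · exact le_trans (hX x (le_trans (le_max_left _ _) h')).le (le_max_right _ _)

lemma aux_int {g : ℝ → ℝ} {B : ℝ} (hg : ContinuousOn g (Ici 0))
    (hB : ∀ x : ℝ, 0 ≤ x → |g x| ≤ B) {z : ℂ} (hz : 0 < z.re) :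
    IntegrableOn (fun x : ℝ => (g x : ℂ) * Complex.exp (-(z * x))) (Ioi 0) := by
  apply Integrable.mono' ((exp_neg_integrableOn_Ioi 0 hz).const_mul B)
  · refine ContinuousOn.aestronglyMeasurable ?_ measurableSet_Ioi
    have hcexp : ContinuousOn (fun x : ℝ => Complex.exp (-(z * x))) (Ioi 0) :=
      (Complex.continuous_exp.comp (by fun_prop : Continuous fun x : ℝ => -(z * (x:ℂ)))).continuousOn
    exact ((Complex.continuous_ofReal.comp_continuousOn hg).mono Ioi_subset_Ici_self).mul hcexp
  · filter_upwards [ae_restrict_mem measurableSet_Ioi] with x hx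
    have : ‖(g x : ℂ) * Complex.exp (-(z * x))‖ = |g x| * Real.exp (-z.re * x) := by
      rw [norm_mul, Complex.norm_real, Real.norm_eq_abs, Complex.norm_exp]
      congr 2
      simp [Complex.mul_re]
    rw [this]
    exact mul_le_mul_of_nonneg_right (hB x (le_of_lt hx)) (Real.exp_pos _).le

lemma aux_pointwise (l b x : ℝ) (s : ℂ) :
    (1/(2*Complex.I)) * ((l:ℂ) * Complex.exp (-((s - Complex.I*b) * x)) -
      (l:ℂ) * Complex.exp (-((s + Complex.I*b) * x)))
    = ((l * Real.sin (b*x) : ℝ):ℂ) * Complex.exp (-(s*x)) := by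
  push_cast
  rw [show -((s - Complex.I*b) * x) = -(s*(x:ℂ)) + ((b:ℂ)*(x:ℂ))*Complex.I by ring,
      show -((s + Complex.I*b) * x) = -(s*(x:ℂ)) + -(((b:ℂ)*(x:ℂ)))*Complex.I by ring,
      Complex.exp_add, Complex.exp_add, Complex.sin]
  field_simp
  ring_nf
  rw [Complex.I_sq]
  ring

/-- If `L ∈ C¹[0,∞)` with `L(x) → 0`, `L'(x) → 0` and `L{L;·}` extends
analytically to a sector `{s ≠ 0 : |arg s| < π − ϑ}` with `ϑ ∈ (0,π/2)`, then
for `L_b(x) = L(x) sin(bx)` there is `M > 0` such that `L_b ∈ V_{α,r}` for all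
`b ≥ M` — with extension `F_b(s) = (1/2i)(F(s−ib) − F(s+ib))` analytic on
`R_{α,r}` and continuous on `R̄_{α,r}` — and `{‖L_b‖_{α,r} : b ∈ [M,M+1]}` is
bounded. -/
theorem Lb_in_V_and_bounded
    (L L' : ℝ → ℝ)
    (hC1 : ∀ x ∈ Set.Ici (0 : ℝ), HasDerivWithinAt L (L' x) (Set.Ici 0) x)
    (hcont : ContinuousOn L' (Set.Ici 0))
    (hL : Tendsto L atTop (nhds 0))
    (hL' : Tendsto L' atTop (nhds 0))
    (ϑ : ℝ) (hϑ0 : 0 < ϑ) (hϑπ : ϑ < Real.pi / 2)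
    (F : ℂ → ℂ)
    (hFan : DifferentiableOn ℂ F
      {s : ℂ | s ≠ 0 ∧ -(Real.pi - ϑ) < s.arg ∧ s.arg < Real.pi - ϑ})
    (hFeq : ∀ s : ℂ, 0 < s.re → F s = Laplace (fun x : ℝ => ((L x : ℝ) : ℂ)) s)
    (α r : ℝ) (hα : α < 0) (hr : 0 < r) :
    ∃ M : ℝ, 0 < M ∧
      (∀ b : ℝ, M ≤ b →
        (∀ x ∈ Set.Ici (0 : ℝ),
          HasDerivWithinAt (fun y : ℝ => L y * Real.sin (b * y))
            (L' x * Real.sin (b * x) + b * L x * Real.cos (b * x)) (Set.Ici 0) x) ∧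
        ContinuousOn (fun x : ℝ => L' x * Real.sin (b * x) + b * L x * Real.cos (b * x))
          (Set.Ici 0) ∧
        Tendsto (fun x : ℝ => L' x * Real.sin (b * x) + b * L x * Real.cos (b * x))
          atTop (nhds 0) ∧
        DifferentiableOn ℂ
          (fun s : ℂ => (1 / (2 * Complex.I)) *
            (F (s - Complex.I * (b : ℂ)) - F (s + Complex.I * (b : ℂ)))) (Ropen α r) ∧
        ContinuousOn
          (fun s : ℂ => (1 / (2 * Complex.I)) *
            (F (s - Complex.I * (b : ℂ)) - F (s + Complex.I * (b : ℂ)))) (Rbar α r) ∧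
        (∀ s : ℂ, 0 < s.re →
          (1 / (2 * Complex.I)) *
              (F (s - Complex.I * (b : ℂ)) - F (s + Complex.I * (b : ℂ))) =
            Laplace (fun x : ℝ => ((L x * Real.sin (b * x) : ℝ) : ℂ)) s)) ∧
      ∃ C : ℝ, ∀ b ∈ Set.Icc M (M + 1),
        (∀ x : ℝ, 0 ≤ x → |L' x * Real.sin (b * x) + b * L x * Real.cos (b * x)| ≤ C) ∧
        (∀ s ∈ Rbar α r,
          ‖(1 / (2 * Complex.I)) *
              (F (s - Complex.I * (b : ℂ)) - F (s + Complex.I * (b : ℂ)))‖ ≤ C) := by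
  have hLcont : ContinuousOn L (Ici 0) := fun x hx => (hC1 x hx).continuousWithinAt
  obtain ⟨B, hB0, hB⟩ := aux_bdd hLcont hL
  obtain ⟨A, hA0, hA⟩ := aux_bdd hcont hL'
  have hc : 0 < Real.cos ϑ := Real.cos_pos_of_mem_Ioo ⟨by linarith [Real.pi_pos], hϑπ⟩
  set S : Set ℂ := {s : ℂ | s ≠ 0 ∧ -(Real.pi - ϑ) < s.arg ∧ s.arg < Real.pi - ϑ} with hS
  set M : ℝ := r + (|α| + 1) / Real.cos ϑ + 1 with hMdef
  have hM0 : 0 < M := by positivity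
  have hMr : r < M := by
    have : 0 < (|α| + 1) / Real.cos ϑ := by positivity
    rw [hMdef]; linarith
  have hsec : ∀ z : ℂ, α ≤ z.re → M - r ≤ |z.im| → z ∈ S := by
    intro z h1 h2
    refine aux_sector hϑ0 hϑπ h1 ?_
    have hd : Real.cos ϑ * ((|α| + 1) / Real.cos ϑ) = |α| + 1 := by field_simp
    have hMz : M - r = (|α| + 1) / Real.cos ϑ + 1 := by rw [hMdef]; ring
    have h2' : (|α| + 1) / Real.cos ϑ + 1 ≤ |z.im| := by rw [hMz] at h2; exact h2
    have := mul_le_mul_of_nonneg_left h2' hc.le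
    rw [mul_add, hd] at this
    linarith
  have hmaps1 : ∀ b : ℝ, M ≤ b → ∀ s ∈ Rbar α r, (s - Complex.I * (b:ℂ)) ∈ S := by
    intro b hb s hs
    obtain ⟨h1, h2, h3⟩ := hs
    rw [abs_le] at h3
    apply hsec
    · simp [Complex.sub_re]; exact h1
    · have : (s - Complex.I * (b:ℂ)).im = s.im - b := by simp
      rw [this, abs_sub_comm, abs_of_nonneg (by linarith)]
      linarith
  have hmaps2 : ∀ b : ℝ, M ≤ b → ∀ s ∈ Rbar α r, (s + Complex.I * (b:ℂ)) ∈ S := by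
    intro b hb s hs
    obtain ⟨h1, h2, h3⟩ := hs
    rw [abs_le] at h3
    apply hsec
    · simp [Complex.add_re]; exact h1
    · have : (s + Complex.I * (b:ℂ)).im = s.im + b := by simp
      rw [this, abs_of_nonneg (by linarith)]
      linarith
  have hFS : ContinuousOn F S := hFan.continuousOn
  have hRsub : Ropen α r ⊆ Rbar α r := fun s hs => ⟨hs.1.le, hs.2.1.le, hs.2.2.le⟩
  refine ⟨M, hM0, fun b hb => ?_, ?_⟩
  · have hb0 : 0 < b := lt_of_lt_of_le hM0 hb
    refine ⟨?_, ?_, ?_, ?_, ?_, ?_⟩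
    · intro x hx
      have hsin : HasDerivAt (fun y : ℝ => Real.sin (b*y)) (Real.cos (b*x) * (b * 1)) x :=
        HasDerivAt.sin ((hasDerivAt_id x).const_mul b)
      have := (hC1 x hx).mul hsin.hasDerivWithinAt
      rw [show L' x * Real.sin (b * x) + b * L x * Real.cos (b * x) = L' x * Real.sin (b * x) + L x * (Real.cos (b * x) * (b * 1)) by ring]
      exact this
    · have c1 : Continuous fun x : ℝ => Real.sin (b*x) := by fun_prop
      have c2 : Continuous fun x : ℝ => Real.cos (b*x) := by fun_prop
      exact (hcont.mul c1.continuousOn).add ((continuousOn_const.mul hLcont).mul c2.continuousOn)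
    · refine squeeze_zero_norm (a := fun x : ℝ => |L' x| + b * |L x|) (fun x => ?_) ?_
      · 
        simp only [Real.norm_eq_abs]
        calc |L' x * Real.sin (b*x) + b * L x * Real.cos (b*x)|
            ≤ |L' x * Real.sin (b*x)| + |b * L x * Real.cos (b*x)| := abs_add_le _ _
          _ ≤ |L' x| + b * |L x| := by
              rw [abs_mul, abs_mul, abs_mul, abs_of_nonneg hb0.le]
              have t1 : |L' x| * |Real.sin (b*x)| ≤ |L' x| * 1 :=
                mul_le_mul_of_nonneg_left (Real.abs_sin_le_one _) (abs_nonneg _)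
              have t2 : b * |L x| * |Real.cos (b*x)| ≤ b * |L x| * 1 :=
                mul_le_mul_of_nonneg_left (Real.abs_cos_le_one _)
                  (mul_nonneg hb0.le (abs_nonneg _))
              linarith
      · have := (hL'.abs).add ((hL.abs).const_mul b)
        simpa using this
    · have g1 : DifferentiableOn ℂ (fun s : ℂ => F (s - Complex.I * (b:ℂ))) (Ropen α r) :=
        hFan.comp ((differentiable_id.sub_const _).differentiableOn)
          (fun s hs => hmaps1 b hb s (hRsub hs))
      have g2 : DifferentiableOn ℂ (fun s : ℂ => F (s + Complex.I * (b:ℂ))) (Ropen α r) :=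
        hFan.comp ((differentiable_id.add_const _).differentiableOn)
          (fun s hs => hmaps2 b hb s (hRsub hs))
      exact (g1.sub g2).const_mul _
    · have g1 : ContinuousOn (fun s : ℂ => F (s - Complex.I * (b:ℂ))) (Rbar α r) :=
        hFS.comp ((continuous_id.sub continuous_const).continuousOn)
          (fun s hs => hmaps1 b hb s hs)
      have g2 : ContinuousOn (fun s : ℂ => F (s + Complex.I * (b:ℂ))) (Rbar α r) :=
        hFS.comp ((continuous_id.add continuous_const).continuousOn)
          (fun s hs => hmaps2 b hb s hs)
      exact continuousOn_const.mul (g1.sub g2)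
    · intro s hs
      have h1re : (s - Complex.I * (b:ℂ)).re = s.re := by simp
      have h2re : (s + Complex.I * (b:ℂ)).re = s.re := by simp
      rw [hFeq _ (by rw [h1re]; exact hs), hFeq _ (by rw [h2re]; exact hs)]
      unfold Laplace
      have hf := aux_int hLcont hB (z := s - Complex.I * (b:ℂ)) (by rw [h1re]; exact hs)
      have hg := aux_int hLcont hB (z := s + Complex.I * (b:ℂ)) (by rw [h2re]; exact hs)
      rw [← integral_sub hf hg, ← integral_const_mul]
      exact integral_congr_ae (Filter.Eventually.of_forall fun x => aux_pointwise (L x) b x s)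
  · set K : Set ℂ := (fun p : ℝ × ℝ => ((p.1 : ℂ) + (p.2 : ℂ) * Complex.I)) ''
      ((Icc α 1 ×ˢ Icc (M - r) (M + 1 + r)) ∪ (Icc α 1 ×ˢ Icc (-(M + 1 + r)) (-(M - r)))) with hK
    have hKc : IsCompact K := (((isCompact_Icc).prod isCompact_Icc).union
      ((isCompact_Icc).prod isCompact_Icc)).image (by fun_prop)
    have hMr0 : 0 < M - r := by linarith
    have hKS : K ⊆ S := by
      rintro z ⟨⟨p1, p2⟩, hp, rfl⟩
      have hre : ((p1:ℂ) + (p2:ℂ) * Complex.I).re = p1 := by simp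
      have him : ((p1:ℂ) + (p2:ℂ) * Complex.I).im = p2 := by simp
      rcases hp with h | h
      · exact hsec _ (by rw [hre]; exact h.1.1)
          (by rw [him, abs_of_nonneg (by linarith [h.2.1])]; exact h.2.1)
      · exact hsec _ (by rw [hre]; exact h.1.1)
          (by rw [him, abs_of_nonpos (by linarith [h.2.2])]; linarith [h.2.2])
    obtain ⟨CF, hCF⟩ := hKc.exists_bound_of_continuousOn (hFS.mono hKS)
    refine ⟨A + (M + 1) * B + max CF 0, fun b hb => ⟨?_, ?_⟩⟩
    · intro x hx
      have hb0 : 0 < b := lt_of_lt_of_le hM0 hb.1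
      have step : |L' x * Real.sin (b*x) + b * L x * Real.cos (b*x)| ≤ |L' x| + b * |L x| := by
        calc |L' x * Real.sin (b*x) + b * L x * Real.cos (b*x)|
            ≤ |L' x * Real.sin (b*x)| + |b * L x * Real.cos (b*x)| := abs_add_le _ _
          _ ≤ |L' x| + b * |L x| := by
              rw [abs_mul, abs_mul, abs_mul, abs_of_nonneg hb0.le]
              have t1 : |L' x| * |Real.sin (b*x)| ≤ |L' x| * 1 :=
                mul_le_mul_of_nonneg_left (Real.abs_sin_le_one _) (abs_nonneg _)
              have t2 : b * |L x| * |Real.cos (b*x)| ≤ b * |L x| * 1 :=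
                mul_le_mul_of_nonneg_left (Real.abs_cos_le_one _)
                  (mul_nonneg hb0.le (abs_nonneg _))
              linarith
      have h1 : |L' x| ≤ A := hA x hx
      have h2 : |L x| ≤ B := hB x hx
      have h3 : b * |L x| ≤ (M + 1) * B := by nlinarith [abs_nonneg (L x), hb.2]
      have h4 : (0:ℝ) ≤ max CF 0 := le_max_right _ _
      linarith
    · intro s hs
      obtain ⟨hs1, hs2, hs3⟩ := hs
      rw [abs_le] at hs3
      have k1 : (s - Complex.I * (b:ℂ)) ∈ K := by
        refine ⟨(s.re, s.im - b), Or.inr ⟨⟨hs1, hs2⟩, ⟨by simp; linarith [hb.1, hb.2], by simp; linarith [hb.1, hb.2]⟩⟩, ?_⟩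
        apply Complex.ext <;> simp
      have k2 : (s + Complex.I * (b:ℂ)) ∈ K := by
        refine ⟨(s.re, s.im + b), Or.inl ⟨⟨hs1, hs2⟩, ⟨by simp; linarith [hb.1, hb.2], by simp; linarith [hb.1, hb.2]⟩⟩, ?_⟩
        apply Complex.ext <;> simp
      have hCF0 : ‖F (s - Complex.I * (b:ℂ))‖ ≤ max CF 0 :=
        le_trans (hCF _ k1) (le_max_left _ _)
      have hCF0' : ‖F (s + Complex.I * (b:ℂ))‖ ≤ max CF 0 :=
        le_trans (hCF _ k2) (le_max_left _ _)
      have hnorm : ‖(1 / (2 * Complex.I) : ℂ)‖ = 1/2 := by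
        simp [map_div₀, map_mul]
      calc ‖(1 / (2 * Complex.I)) * (F (s - Complex.I * (b:ℂ)) - F (s + Complex.I * (b:ℂ)))‖
          = (1/2) * ‖F (s - Complex.I * (b:ℂ)) - F (s + Complex.I * (b:ℂ))‖ := by
            rw [norm_mul, hnorm]
        _ ≤ (1/2) * (max CF 0 + max CF 0) := by
            have := norm_sub_le (F (s - Complex.I * (b:ℂ))) (F (s + Complex.I * (b:ℂ)))
            nlinarith
        _ ≤ A + (M + 1) * B + max CF 0 := by
            have h5 : (0:ℝ) ≤ (M + 1) * B := mul_nonneg (by linarith) hB0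
            have h6 : (1:ℝ)/2 * (max CF 0 + max CF 0) = max CF 0 := by ring
            rw [h6]
            linarith
end
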